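/- Let J be the set of monic polynomials of degree n over F_q whose i-th coefficient equals a prescribed value α_i for each i in a set I ⊆ {0,...,n−1}, and let S_J(ξ) = ∑_{f∈J} e(fξ). Then ∫_T |S_J(ξ)| dξ = 1, where the integral is with respect to the normalized Haar measure on T. -/

import Mathlib

open Polynomial MeasureTheory

/-- The standard additive character `e(ξ) = exp(2πi·tr(x_{-1})/p)` evaluated on a
`t^{-1}`-coefficient `x ∈ F_q`. -/
noncomputable def eChar {Fq : Type} [Field Fq] [Fintype Fq] (p : ℕ)
    [Algebra (ZMod p) Fq] (x : Fq) : ℂ :=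
  Complex.exp (2 * Real.pi * Complex.I *
    ((Algebra.trace (ZMod p) Fq x).val : ℂ) / p)

section Char

variable {Fq : Type} [Field Fq] [Fintype Fq] {p : ℕ} [Fact p.Prime] [CharP Fq p]
  [Algebra (ZMod p) Fq]

/-- eChar as an additive character. -/
noncomputable def psiChar (Fq : Type) [Field Fq] [Fintype Fq] (p : ℕ) [Fact p.Prime]
    [Algebra (ZMod p) Fq] : AddChar Fq ℂ :=
  haveI : NeZero p := ⟨(Fact.out : p.Prime).ne_zero⟩
  (ZMod.stdAddChar (N := p)).compAddMonoidHom (Algebra.trace (ZMod p) Fq).toAddMonoidHom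

lemma eChar_eq_psi (x : Fq) : eChar p x = psiChar Fq p x := by
  haveI : NeZero p := ⟨(Fact.out : p.Prime).ne_zero⟩
  rw [psiChar, AddChar.compAddMonoidHom_apply, ZMod.stdAddChar_apply, ZMod.toCircle_apply]
  simp only [eChar, LinearMap.toAddMonoidHom_coe]

set_option maxHeartbeats 1000000 in
open scoped Classical in
lemma sum_eChar (b : Fq) :
    ∑ x : Fq, eChar p (x * b) = if b = 0 then (Fintype.card Fq : ℂ) else 0 := by
  classical
  haveI : NeZero p := ⟨(Fact.out : p.Prime).ne_zero⟩
  simp_rw [eChar_eq_psi]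
  by_cases hb : b = 0
  · simp [hb]
  · rw [if_neg hb]
    have hp : ringChar Fq = p := ringChar.eq Fq p
    subst hp
    obtain ⟨a, ha⟩ := FiniteField.trace_to_zmod_nondegenerate Fq hb
    have hne : (psiChar Fq (ringChar Fq)).mulShift b ≠ 1 := by
      rw [AddChar.ne_one_iff]
      refine ⟨a, ?_⟩
      rw [AddChar.mulShift_apply]
      intro hcon
      apply ha
      have := ZMod.injective_stdAddChar (N := ringChar Fq)
      have h0 : psiChar Fq (ringChar Fq) (b * a)
          = ZMod.stdAddChar (Algebra.trace (ZMod (ringChar Fq)) Fq (b * a)) := rfl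
      rw [h0] at hcon
      have : ZMod.stdAddChar (Algebra.trace (ZMod (ringChar Fq)) Fq (b * a))
          = ZMod.stdAddChar (0 : ZMod (ringChar Fq)) := by
        rw [hcon, AddChar.map_zero_eq_one]
      exact ZMod.injective_stdAddChar this
    have := AddChar.sum_eq_zero_of_ne_one hne
    simpa [AddChar.mulShift_apply, mul_comm] using this

lemma abs_eChar (x : Fq) : ‖eChar p x‖ = 1 := by
  rw [eChar]
  have : 2 * ↑Real.pi * Complex.I * ((Algebra.trace (ZMod p) Fq x).val : ℂ) / p
      = ((2 * Real.pi * ((Algebra.trace (ZMod p) Fq x).val : ℝ) / p : ℝ) : ℂ) * Complex.I := by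
    push_cast; ring
  rw [this, Complex.norm_exp_ofReal_mul_I]

end Char

section Char2
variable {Fq : Type} [Field Fq] [Fintype Fq] {p : ℕ} [Fact p.Prime] [CharP Fq p]
  [Algebra (ZMod p) Fq]

lemma eChar_zero : eChar p (0 : Fq) = 1 := by
  rw [eChar_eq_psi, AddChar.map_zero_eq_one]

lemma eChar_add (x y : Fq) : eChar p (x + y) = eChar p x * eChar p y := by
  simp_rw [eChar_eq_psi, AddChar.map_add_eq_mul]

lemma eChar_sum {ι : Type*} (s : Finset ι) (f : ι → Fq) :
    eChar p (∑ i ∈ s, f i) = ∏ i ∈ s, eChar p (f i) := by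
  classical
  induction s using Finset.induction_on with
  | empty => simp [eChar_zero]
  | insert a s h ih => rw [Finset.sum_insert h, Finset.prod_insert h, eChar_add, ih]

end Char2

lemma haar_cylinder (Fq : Type) [Field Fq] [Fintype Fq]
    [TopologicalSpace Fq] [DiscreteTopology Fq] [IsTopologicalAddGroup Fq]
    [MeasurableSpace Fq] [MeasurableSingletonClass Fq]
    (F : Finset ℕ) (μ : Measure (ℕ → Fq)) [μ.IsAddHaarMeasure] (hμ : μ Set.univ = 1) :
    μ {φ : ℕ → Fq | ∀ i ∈ F, φ i = 0} = ((Fintype.card Fq : ENNReal) ^ F.card)⁻¹ := by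
  classical
  set V : Set (ℕ → Fq) := {φ : ℕ → Fq | ∀ i ∈ F, φ i = 0} with hV
  have hmeas : ∀ (c : ℕ → Fq), MeasurableSet {φ : ℕ → Fq | ∀ i ∈ F, φ i = c i} := by
    intro c
    have : {φ : ℕ → Fq | ∀ i ∈ F, φ i = c i}
        = ⋂ i ∈ (F : Set ℕ), (fun φ : ℕ → Fq => φ i) ⁻¹' {c i} := by
      ext φ; simp
    rw [this]
    exact MeasurableSet.biInter F.countable_toSet
      (fun i _ => (measurable_pi_apply i) (measurableSet_singleton (c i)))
  have hVmeas : MeasurableSet V := hmeas 0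
  -- the translate sets
  set e : (F → Fq) → (ℕ → Fq) := fun c i => if h : i ∈ F then c ⟨i, h⟩ else 0 with he
  set A : (F → Fq) → Set (ℕ → Fq) := fun c => {φ | ∀ i ∈ F, φ i = e c i} with hA
  have hAeq : ∀ c, A c = (fun φ : ℕ → Fq => -(e c) + φ) ⁻¹' V := by
    intro c
    ext φ
    simp only [hA, hV, Set.mem_setOf_eq, Set.mem_preimage, Pi.add_apply, Pi.neg_apply]
    constructor
    · intro h i hi; rw [h i hi]; ring
    · intro h i hi; have := h i hi; linear_combination this
  have hmeasA : ∀ c, μ (A c) = μ V := by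
    intro c
    rw [hAeq]
    exact measure_preimage_add μ (-(e c)) V
  have hcover : Set.univ = ⋃ c : F → Fq, A c := by
    ext φ
    simp only [Set.mem_univ, Set.mem_iUnion, true_iff]
    refine ⟨fun i => φ i, fun i hi => ?_⟩
    simp [he, hi]
  have hdisj : Pairwise (Function.onFun Disjoint A) := by
    intro c d hcd
    rw [Function.onFun, Set.disjoint_left]
    intro φ h1 h2
    apply hcd
    funext i
    have e1 := h1 i.1 i.2
    have e2 := h2 i.1 i.2
    have : e c i.1 = e d i.1 := by rw [← e1, e2]
    simpa [he, i.2] using this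
  have hsum : μ Set.univ = ∑' c : F → Fq, μ (A c) := by
    rw [hcover]
    refine measure_iUnion hdisj (fun c => ?_)
    rw [hAeq]
    exact (measurable_const_add (-(e c))) hVmeas
  rw [hμ] at hsum
  simp_rw [hmeasA, tsum_fintype, Finset.sum_const, Finset.card_univ] at hsum
  have hcard : (Fintype.card (F → Fq)) = Fintype.card Fq ^ F.card := by
    rw [Fintype.card_fun, Fintype.card_coe]
  have h1 : μ V * ((Fintype.card Fq : ENNReal) ^ F.card) = 1 := by
    rw [hsum, hcard, nsmul_eq_mul]
    push_cast
    ring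
  exact ENNReal.eq_inv_of_mul_eq_one_left h1

set_option maxHeartbeats 1000000 in
open scoped Classical in
lemma SJ_factor {Fq : Type} [Field Fq] [Fintype Fq] {p : ℕ} [Fact p.Prime] [CharP Fq p]
    [Algebra (ZMod p) Fq]
    (n : ℕ) (I : Finset ℕ) (hI : I ⊆ Finset.range n) (α : ℕ → Fq)
    (J : Finset (Polynomial Fq))
    (hJ : ∀ f, f ∈ J ↔ f.Monic ∧ f.natDegree = n ∧ ∀ i ∈ I, f.coeff i = α i)
    (φ : ℕ → Fq) :
    ∑ f ∈ J, eChar p (∑ i ∈ f.support, f.coeff i * φ i)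
      = eChar p (φ n + ∑ i ∈ I, α i * φ i) *
        ∏ i : ((Finset.range n \ I) : Finset ℕ), (∑ x : Fq, eChar p (x * φ i.1)) := by
  classical
  set F : Finset ℕ := Finset.range n \ I with hF
  have hFn : ∀ i ∈ F, i < n := fun i hi => Finset.mem_range.mp (Finset.mem_sdiff.mp hi).1
  have hUnion : I ∪ F = Finset.range n := Finset.union_sdiff_of_subset hI
  have hDisj : Disjoint I F := Finset.disjoint_sdiff
  -- Step A : rewrite each exponent
  have stepA : ∀ f ∈ J, ∑ i ∈ f.support, f.coeff i * φ i
      = (φ n + ∑ i ∈ I, α i * φ i) + ∑ i ∈ F, f.coeff i * φ i := by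
    intro f hf
    obtain ⟨hm, hd, hc⟩ := (hJ f).mp hf
    have hsupp : f.support ⊆ Finset.range (n + 1) := by
      rw [← hd]
      exact Polynomial.supp_subset_range_natDegree_succ
    rw [Finset.sum_subset hsupp (fun i _ hi => by
      rw [Polynomial.notMem_support_iff.mp hi, zero_mul])]
    rw [Finset.range_add_one, Finset.sum_insert Finset.notMem_range_self]
    have hcn : f.coeff n = 1 := by rw [← hd]; exact hm.coeff_natDegree
    rw [hcn, one_mul, ← hUnion, Finset.sum_union hDisj]
    have : ∑ i ∈ I, f.coeff i * φ i = ∑ i ∈ I, α i * φ i :=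
      Finset.sum_congr rfl (fun i hi => by rw [hc i hi])
    rw [this]
    ring
  rw [Finset.sum_congr rfl (fun f hf => by rw [stepA f hf, eChar_add])]
  rw [← Finset.mul_sum]
  congr 1
  -- Step B : reindex the sum over J by free coefficient tuples
  set coefFun : (F → Fq) → ℕ → Fq :=
    fun c j => if j = n then 1 else if h : j ∈ F then c ⟨j, h⟩ else α j with hcoefFun
  set g : (F → Fq) → Polynomial Fq :=
    fun c => ∑ j ∈ Finset.range (n + 1), Polynomial.C (coefFun c j) * Polynomial.X ^ j with hg
  have hgcoeff : ∀ c m, (g c).coeff m = if m < n + 1 then coefFun c m else 0 := by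
    intro c m
    rw [hg]
    simp only [Polynomial.finset_sum_coeff, Polynomial.coeff_C_mul, Polynomial.coeff_X_pow,
      mul_ite, mul_one, mul_zero]
    rw [Finset.sum_ite_eq (Finset.range (n + 1)) m (fun j => coefFun c j)]
    simp [Finset.mem_range]
  have hgJ : ∀ c, g c ∈ J := by
    intro c
    have hle : (g c).natDegree ≤ n := by
      rw [Polynomial.natDegree_le_iff_coeff_eq_zero]
      intro m hm
      rw [hgcoeff]
      rw [if_neg (by omega)]
    have hcn : (g c).coeff n = 1 := by
      rw [hgcoeff, if_pos (by omega), hcoefFun]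
      simp
    have hdeg : (g c).natDegree = n :=
      Polynomial.natDegree_eq_of_le_of_coeff_ne_zero hle (by rw [hcn]; exact one_ne_zero)
    refine (hJ _).mpr ⟨?_, hdeg, ?_⟩
    · rw [Polynomial.Monic, Polynomial.leadingCoeff, hdeg, hcn]
    · intro i hi
      have hin : i < n := Finset.mem_range.mp (hI hi)
      have hiF : i ∉ F := fun h => (Finset.mem_sdiff.mp h).2 hi
      rw [hgcoeff, if_pos (by omega), hcoefFun]
      simp only
      rw [if_neg (by omega), dif_neg hiF]
  have hleft : ∀ f ∈ J, g (fun j : F => f.coeff j.1) = f := by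
    intro f hf
    obtain ⟨hm, hd, hc⟩ := (hJ f).mp hf
    apply Polynomial.ext
    intro m
    rw [hgcoeff (fun j : F => f.coeff j.1) m]
    by_cases hmn : m < n + 1
    · rw [if_pos hmn, hcoefFun]
      simp only
      by_cases hmn' : m = n
      · rw [if_pos hmn', hmn', ← hd, hm.coeff_natDegree]
      · rw [if_neg hmn']
        by_cases hmF : m ∈ F
        · rw [dif_pos hmF]
        · rw [dif_neg hmF]
          have hmI : m ∈ I := by
            have : m ∈ Finset.range n := Finset.mem_range.mpr (by omega)
            rw [← hUnion] at this
            rcases Finset.mem_union.mp this with h | h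
            · exact h
            · exact absurd h hmF
          rw [hc m hmI]
    · rw [if_neg hmn]
      exact (Polynomial.coeff_eq_zero_of_natDegree_lt (by omega : f.natDegree < m)).symm
  have hright : ∀ c : F → Fq, (fun j : F => (g c).coeff j.1) = c := by
    intro c
    funext j
    rw [hgcoeff, if_pos (by have := hFn j.1 j.2; omega), hcoefFun]
    simp only
    rw [if_neg (by have := hFn j.1 j.2; omega), dif_pos j.2]
  have step1 : ∑ f ∈ J, eChar p (∑ i ∈ F, f.coeff i * φ i)
      = ∑ c : F → Fq, eChar p (∑ j : F, c j * φ j.1) := by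
    refine Finset.sum_nbij' (fun f => (fun j : F => f.coeff j.1)) (fun c => g c)
      (fun f _ => Finset.mem_univ _) (fun c _ => hgJ c)
      (fun f hf => hleft f hf) (fun c _ => hright c) ?_
    intro f hf
    congr 1
    rw [← Finset.sum_coe_sort F (fun i => f.coeff i * φ i)]
  rw [step1]
  have step2 : ∀ c : F → Fq, eChar p (∑ j : F, c j * φ j.1)
      = ∏ j : F, eChar p (c j * φ j.1) := fun c => eChar_sum Finset.univ _
  rw [Finset.sum_congr rfl (fun c _ => step2 c)]
  rw [show (Finset.univ : Finset (F → Fq)) = Fintype.piFinset (fun _ : F => (Finset.univ : Finset Fq)) from (Fintype.piFinset_univ).symm]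
  exact (Finset.prod_univ_sum (fun _ : F => (Finset.univ : Finset Fq))
    (fun j x => eChar p (x * φ j.1))).symm

/-- `∫_T |S_J(ξ)| dξ = 1`: for the set `J` of monic polynomials of degree `n`
with prescribed coefficients `α i` for `i ∈ I`, and `T = {ξ : |ξ| < 1}`
identified with coefficient sequences `φ : ℕ → Fq` (`φ i = ξ_{-(i+1)}`) and
equipped with the normalized Haar measure, the integral of
`|S_J(ξ)| = |∑_{f ∈ J} e(fξ)|` equals `1`; the `t^{-1}`-coefficient of `fξ` is
`∑ᵢ fᵢ·φ i`. -/
theorem integral_abs_SJ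
    (Fq : Type) [Field Fq] [Fintype Fq] (p : ℕ) [Fact p.Prime] [CharP Fq p]
    [Algebra (ZMod p) Fq]
    [TopologicalSpace Fq] [DiscreteTopology Fq] [IsTopologicalAddGroup Fq]
    [MeasurableSpace Fq] [MeasurableSingletonClass Fq]
    (n : ℕ) (I : Finset ℕ) (hI : I ⊆ Finset.range n) (α : ℕ → Fq)
    (J : Finset (Polynomial Fq))
    (hJ : ∀ f, f ∈ J ↔ f.Monic ∧ f.natDegree = n ∧ ∀ i ∈ I, f.coeff i = α i)
    (μ : Measure (ℕ → Fq)) [μ.IsAddHaarMeasure] (hμ : μ Set.univ = 1) :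
    ∫ φ : ℕ → Fq,
        ‖∑ f ∈ J, eChar p (∑ i ∈ f.support, f.coeff i * φ i)‖ ∂μ
      = 1 := by
  classical
  set F : Finset ℕ := Finset.range n \ I with hF
  set q : ℕ := Fintype.card Fq with hq
  have hq0 : 0 < q := Fintype.card_pos
  set V : Set (ℕ → Fq) := {φ : ℕ → Fq | ∀ i ∈ F, φ i = 0} with hV
  have hVmeas : MeasurableSet V := by
    have : V = ⋂ i ∈ (F : Set ℕ), (fun φ : ℕ → Fq => φ i) ⁻¹' {(0 : Fq)} := by
      ext φ; simp [hV]
    rw [this]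
    exact MeasurableSet.biInter F.countable_toSet
      (fun i _ => (measurable_pi_apply i) (measurableSet_singleton 0))
  have key : ∀ φ : ℕ → Fq,
      ‖∑ f ∈ J, eChar p (∑ i ∈ f.support, f.coeff i * φ i)‖
        = V.indicator (fun _ => ((q : ℝ) ^ F.card)) φ := by
    intro φ
    rw [SJ_factor n I hI α J hJ φ]
    rw [norm_mul, abs_eChar, one_mul, norm_prod]
    have habs : ∀ i : F, ‖∑ x : Fq, eChar p (x * φ i.1)‖
        = if φ i.1 = 0 then (q : ℝ) else 0 := by
      intro i
      rw [sum_eChar (φ i.1)]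
      split_ifs <;> simp [hq]
    rw [Finset.prod_congr rfl (fun i _ => habs i)]
    by_cases h : ∀ i ∈ F, φ i = 0
    · rw [Set.indicator_of_mem (by exact h) (fun _ => ((q : ℝ) ^ F.card))]
      rw [Finset.prod_congr rfl (fun i _ => if_pos (h i.1 i.2))]
      rw [Finset.prod_const, Finset.card_univ, Fintype.card_coe]
    · rw [Set.indicator_of_notMem (by exact h) (fun _ => ((q : ℝ) ^ F.card))]
      push_neg at h
      obtain ⟨i, hiF, hi⟩ := h
      exact Finset.prod_eq_zero (Finset.mem_univ (⟨i, hiF⟩ : F)) (if_neg hi)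
  rw [integral_congr_ae (Filter.Eventually.of_forall key)]
  rw [integral_indicator_const _ hVmeas]
  rw [hV, measureReal_def, haar_cylinder Fq F μ hμ]
  rw [smul_eq_mul, ENNReal.toReal_inv]
  rw [ENNReal.toReal_pow, ENNReal.toReal_natCast]
  rw [← hq, inv_mul_cancel₀ (by positivity)]
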